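/- Let X be a compact Alexandroff space with at least two elements, endow X^ℕ with the product topology, and let σ : X^ℕ → X^ℕ be the one-sided shift (x_n)_{n∈ℕ} ↦ (x_{n+1})_{n∈ℕ}. Then the following statements are equivalent: (a) σ is Li–Yorke chaotic; (b) σ has at least one scrambled pair of distinct points; (c) σ has at least one non-asymptotic pair of distinct points; (d) there exist a, b ∈ X with closure{a} ∩ closure{b} = ∅; (e) ⋂ { closure{x} : x ∈ X } = ∅; (f) for every z ∈ X the smallest open neighbourhood V(z) of z is a proper subset of X. -/

import Mathlib

open Filter Topology Set

/-- The one-sided shift on `ℕ → X`. -/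
def shift {X : Type*} : (ℕ → X) → (ℕ → X) := fun x n => x (n + 1)

/-- `(x, y)` is a scrambled pair for `f`. -/
def ScrambledPair {Y : Type*} [TopologicalSpace Y] (f : Y → Y) (x y : Y) : Prop :=
  (∀ U : Set (Y × Y), IsOpen U → (∀ z : Y, (z, z) ∈ U) →
      ∃ n : ℕ, (f^[n] x, f^[n] y) ∈ U) ∧
  (∃ U : Set (Y × Y), IsOpen U ∧ (∀ z : Y, (z, z) ∈ U) ∧
      {n : ℕ | (f^[n] x, f^[n] y) ∉ U}.Infinite)

/-- `(x, y)` is an asymptotic pair for `f`. -/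
def AsymptoticPair {Y : Type*} [TopologicalSpace Y] (f : Y → Y) (x y : Y) : Prop :=
  ∀ U : Set (Y × Y), IsOpen U → (∀ z : Y, (z, z) ∈ U) →
    {n : ℕ | (f^[n] x, f^[n] y) ∉ U}.Finite

/-- `f` is Li–Yorke chaotic. -/
def LiYorkeChaotic {Y : Type*} [TopologicalSpace Y] (f : Y → Y) : Prop :=
  ∃ A : Set Y, ¬ A.Countable ∧ ∀ x ∈ A, ∀ y ∈ A, x ≠ y → ScrambledPair f x y

/- ### Auxiliary machinery -/

lemma shift_iter {X : Type*} (x : ℕ → X) : ∀ (n i : ℕ), (shift^[n] x) i = x (i + n) := by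
  intro n
  induction n generalizing x with
  | zero => intro i; rfl
  | succ n ih =>
    intro i
    rw [Function.iterate_succ_apply, ih (shift x) i]
    rfl

/-- Coding function: positions in dyadic blocks with odd index carry a code,
the other blocks (of unbounded length) are "silent". -/
def codeFn (p : ℕ) : Option ℕ :=
  if Nat.log 2 (p + 1) % 2 = 1 then some (p + 1 - 2 ^ Nat.log 2 (p + 1)) else none

lemma codeFn_none {k i : ℕ} (h : i < 2 ^ (2 * k)) : codeFn (2 ^ (2 * k) - 1 + i) = none := by
  have h1 : 1 ≤ 2 ^ (2 * k) := Nat.one_le_two_pow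
  have hp : 2 ^ (2 * k) - 1 + i + 1 = 2 ^ (2 * k) + i := by omega
  have hlog : Nat.log 2 (2 ^ (2 * k) + i) = 2 * k := by
    refine Nat.log_eq_of_pow_le_of_lt_pow (Nat.le_add_right _ _) ?_
    rw [pow_succ]
    omega
  unfold codeFn
  rw [hp, hlog, if_neg (by omega)]

lemma codeFn_some {k m : ℕ} (hm : m < 2 ^ (2 * k + 1)) :
    codeFn (2 ^ (2 * k + 1) + m - 1) = some m := by
  have h1 : 1 ≤ 2 ^ (2 * k + 1) := Nat.one_le_two_pow
  have hp : 2 ^ (2 * k + 1) + m - 1 + 1 = 2 ^ (2 * k + 1) + m := by omega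
  have hlog : Nat.log 2 (2 ^ (2 * k + 1) + m) = 2 * k + 1 := by
    refine Nat.log_eq_of_pow_le_of_lt_pow (Nat.le_add_right _ _) ?_
    rw [pow_succ]
    omega
  unfold codeFn
  rw [hp, hlog, if_pos (by omega)]
  congr 1
  omega

lemma codeFn_long_none (N : ℕ) : ∃ n : ℕ, ∀ i ≤ N, codeFn (n + i) = none := by
  refine ⟨2 ^ (2 * N) - 1, fun i hi => ?_⟩
  refine codeFn_none ?_
  calc i ≤ N := hi
    _ < 2 ^ N := (Nat.lt_two_pow_self (n := N))
    _ ≤ 2 ^ (2 * N) := Nat.pow_le_pow_right (by norm_num) (by omega)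

lemma codeFn_infinite (m : ℕ) : {p : ℕ | codeFn p = some m}.Infinite := by
  have hmem : ∀ j : ℕ, m < 2 ^ (2 * (j + m) + 1) := by
    intro j
    calc m < 2 ^ m := (Nat.lt_two_pow_self (n := m))
      _ ≤ 2 ^ (2 * (j + m) + 1) := Nat.pow_le_pow_right (by norm_num) (by omega)
  refine Set.infinite_of_injective_forall_mem
    (f := fun j : ℕ => 2 ^ (2 * (j + m) + 1) + m - 1) ?_ ?_
  · intro j j' hjj'
    by_contra hne
    wlog hlt : j < j' generalizing j j'
    · exact this hjj'.symm (Ne.symm hne) (by omega)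
    have hjj2 : 2 ^ (2 * (j + m) + 1) + m - 1 = 2 ^ (2 * (j' + m) + 1) + m - 1 := hjj'
    have h2 : 2 ^ (2 * (j + m) + 1) < 2 ^ (2 * (j' + m) + 1) :=
      Nat.pow_lt_pow_right (by norm_num) (by omega)
    have h3 := hmem j
    have h4 := hmem j'
    omega
  · intro j
    exact codeFn_some (hmem j)

/-- The sequences used to build the scrambled set. -/
def seqOf {X : Type*} (a b : X) (s : ℕ → Bool) : ℕ → X := fun p =>
  match codeFn p with
  | none => a
  | some m => if s m then a else b

lemma seqOf_none {X : Type*} (a b : X) (u : ℕ → Bool) {p : ℕ} (h : codeFn p = none) :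
    seqOf a b u p = a := by
  unfold seqOf
  rw [h]

lemma seqOf_some {X : Type*} (a b : X) (u : ℕ → Bool) {p m : ℕ} (h : codeFn p = some m) :
    seqOf a b u p = if u m then a else b := by
  unfold seqOf
  rw [h]

lemma uncountable_nat_bool : Uncountable (ℕ → Bool) := by
  rw [← not_countable_iff]
  intro h
  have h2 : Countable (Set ℕ) := by
    have e : (ℕ → Prop) ≃ (ℕ → Bool) := Equiv.arrowCongr (Equiv.refl ℕ) Equiv.propEquivBool
    exact Countable.of_equiv _ e.symm
  obtain ⟨f, hf⟩ := h2.exists_injective_nat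
  exact Function.cantor_injective f hf

lemma scrambled_of_disjoint {X : Type*} [TopologicalSpace X] {a b : X}
    (hab : closure {a} ∩ closure {b} = ∅) {s t : ℕ → Bool} {m : ℕ} (hm : s m ≠ t m) :
    ScrambledPair (shift : (ℕ → X) → (ℕ → X)) (seqOf a b s) (seqOf a b t) := by
  constructor
  · -- proximality via long silent blocks
    intro U hU hdiag
    set c : ℕ → X := fun _ => a with hc
    have hnb : U ∈ 𝓝 ((c, c) : (ℕ → X) × (ℕ → X)) := hU.mem_nhds (hdiag c)
    rw [nhds_prod_eq] at hnb
    obtain ⟨S, hS, T, hT, hST⟩ := Filter.mem_prod_iff.mp hnb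
    rw [nhds_pi] at hS hT
    obtain ⟨I, hIfin, W, hW, hWS⟩ := Filter.mem_pi.mp hS
    obtain ⟨J, hJfin, W', hW', hWT⟩ := Filter.mem_pi.mp hT
    obtain ⟨N, hN⟩ := (hIfin.union hJfin).bddAbove
    obtain ⟨n, hn⟩ := codeFn_long_none N
    have key : ∀ (u : ℕ → Bool) (i : ℕ), i ≤ N → (shift^[n] (seqOf a b u)) i = a := by
      intro u i hi
      rw [shift_iter]
      have : codeFn (i + n) = none := by rw [Nat.add_comm]; exact hn i hi
      exact seqOf_none a b u this
    refine ⟨n, hST ⟨?_, ?_⟩⟩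
    · apply hWS
      intro i hi
      show shift^[n] (seqOf a b s) i ∈ W i
      rw [key s i (hN (Set.mem_union_left _ hi))]
      exact mem_of_mem_nhds (hW i)
    · apply hWT
      intro i hi
      show shift^[n] (seqOf a b t) i ∈ W' i
      rw [key t i (hN (Set.mem_union_right _ hi))]
      exact mem_of_mem_nhds (hW' i)
  · -- separation along the coding positions of `m`
    set C : Set (X × X) := (closure {a} ×ˢ closure {b}) ∪ (closure {b} ×ˢ closure {a}) with hC
    refine ⟨{q : (ℕ → X) × (ℕ → X) | (q.1 0, q.2 0) ∉ C}, ?_, ?_, ?_⟩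
    · have hCcl : IsClosed C :=
        (isClosed_closure.prod isClosed_closure).union (isClosed_closure.prod isClosed_closure)
      have hcont : Continuous (fun q : (ℕ → X) × (ℕ → X) => (q.1 0, q.2 0)) :=
        ((continuous_apply 0).comp continuous_fst).prodMk
          ((continuous_apply 0).comp continuous_snd)
      exact hCcl.isOpen_compl.preimage hcont
    · intro z hz
      have hmem : z 0 ∈ closure {a} ∩ closure {b} := by
        simp only [Set.mem_union, Set.mem_prod] at hz
        rcases hz with ⟨h1, h2⟩ | ⟨h1, h2⟩
        · exact ⟨h1, h2⟩
        · exact ⟨h2, h1⟩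
      rw [hab] at hmem
      exact hmem
    · apply Set.Infinite.mono _ (codeFn_infinite m)
      intro p hp
      simp only [Set.mem_setOf_eq] at hp ⊢
      intro hcon
      apply hcon
      have h1 : (shift^[p] (seqOf a b s)) 0 = seqOf a b s p := by rw [shift_iter]; ring_nf
      have h2 : (shift^[p] (seqOf a b t)) 0 = seqOf a b t p := by rw [shift_iter]; ring_nf
      rw [h1, h2]
      have hs : seqOf a b s p = if s m then a else b := seqOf_some a b s hp
      have ht : seqOf a b t p = if t m then a else b := seqOf_some a b t hp
      rw [hs, ht]
      rcases Bool.dichotomy (s m) with hsm | hsm <;>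
        rcases Bool.dichotomy (t m) with htm | htm <;>
        simp only [hsm, htm, if_true, if_false, Bool.false_eq_true, Bool.true_eq_false]
      · exact absurd (hsm.trans htm.symm) hm
      · exact Set.mem_union_right _ (Set.mk_mem_prod (subset_closure rfl) (subset_closure rfl))
      · exact Set.mem_union_left _ (Set.mk_mem_prod (subset_closure rfl) (subset_closure rfl))
      · exact absurd (hsm.trans htm.symm) hm

theorem stmt_11 {X : Type*} [TopologicalSpace X] [CompactSpace X] [Nontrivial X]
    (hAlex : ∀ S : Set (Set X), (∀ s ∈ S, IsOpen s) → IsOpen (⋂₀ S))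
    (V : X → Set X)
    (hV : ∀ x : X, IsOpen (V x) ∧ x ∈ V x ∧ ∀ U : Set X, IsOpen U → x ∈ U → V x ⊆ U) :
    List.TFAE
      [LiYorkeChaotic (shift : (ℕ → X) → (ℕ → X)),
       ∃ z w : ℕ → X, z ≠ w ∧ ScrambledPair (shift : (ℕ → X) → (ℕ → X)) z w,
       ∃ z w : ℕ → X, z ≠ w ∧ ¬ AsymptoticPair (shift : (ℕ → X) → (ℕ → X)) z w,
       ∃ a b : X, closure {a} ∩ closure {b} = ∅,
       (⋂ x : X, closure {x}) = ∅,
       ∀ z : X, V z ≠ Set.univ] := by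
  tfae_have 1 → 2 := by
    rintro ⟨A, hA, hscr⟩
    have hnsub : ¬ A.Subsingleton := fun h => hA h.countable
    rw [Set.not_subsingleton_iff] at hnsub
    obtain ⟨x, hx, y, hy, hxy⟩ := hnsub
    exact ⟨x, y, hxy, hscr x hx y hy hxy⟩
  tfae_have 2 → 3 := by
    rintro ⟨z, w, hzw, h1, U, hUo, hUd, hinf⟩
    exact ⟨z, w, hzw, fun hA => hinf (hA U hUo hUd)⟩
  tfae_have 3 → 6 := by
    rintro ⟨z, w, hzw, hna⟩
    by_contra h6
    push_neg at h6
    obtain ⟨u, hu⟩ := h6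
    apply hna
    intro U hUo hUd
    have key : ∀ S : Set X, S ∈ 𝓝 u → S = Set.univ := by
      intro S hS
      obtain ⟨O, hOS, hOo, huO⟩ := mem_nhds_iff.mp hS
      have : Set.univ ⊆ O := hu ▸ (hV u).2.2 O hOo huO
      exact Set.eq_univ_of_univ_subset (this.trans hOS)
    have keyPi : ∀ S : Set (ℕ → X), S ∈ 𝓝 (fun _ => u : ℕ → X) → S = Set.univ := by
      intro S hS
      rw [nhds_pi] at hS
      obtain ⟨I, hIfin, W, hW, hWS⟩ := Filter.mem_pi.mp hS
      refine Set.eq_univ_of_univ_subset (fun x _ => hWS ?_)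
      intro i _
      rw [key (W i) (hW i)]
      exact Set.mem_univ _
    have hnb : U ∈ 𝓝 ((fun _ => u : ℕ → X), (fun _ => u : ℕ → X)) :=
      hUo.mem_nhds (hUd _)
    rw [nhds_prod_eq] at hnb
    obtain ⟨S, hS, T, hT, hST⟩ := Filter.mem_prod_iff.mp hnb
    have hU : U = Set.univ := by
      rw [keyPi S hS, keyPi T hT, Set.univ_prod_univ] at hST
      exact Set.eq_univ_of_univ_subset hST
    have : {n : ℕ | (shift^[n] z, shift^[n] w) ∉ U} = ∅ := by
      ext n; simp [hU]
    rw [this]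
    exact Set.finite_empty
  tfae_have 6 → 5 := by
    intro h6
    rw [Set.eq_empty_iff_forall_notMem]
    intro z hz
    apply h6 z
    apply Set.eq_univ_of_forall
    intro x
    have hzc : z ∈ closure {x} := Set.mem_iInter.mp hz x
    obtain ⟨y, hy1, hy2⟩ := mem_closure_iff.mp hzc (V z) (hV z).1 (hV z).2.1
    rw [Set.mem_singleton_iff] at hy2
    exact hy2 ▸ hy1
  tfae_have 5 → 4 := by
    intro h5
    set S : Set (Set X) := Set.range (fun x : X => closure {x}) with hSdef
    have hzorn : ∀ c ⊆ S, IsChain (· ⊆ ·) c → c.Nonempty → ∃ lb ∈ S, ∀ s ∈ c, lb ⊆ s := by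
      intro c hcS hchain hcne
      have hne : Nonempty c := hcne.to_subtype
      have hdir : DirectedOn (· ⊇ ·) c := by
        intro x hx y hy
        rcases hchain.total hx hy with h | h
        · exact ⟨x, hx, le_refl _, h⟩
        · exact ⟨y, hy, h, le_refl _⟩
      have hcl : ∀ U ∈ c, IsClosed U := by
        intro U hU
        obtain ⟨x, rfl⟩ := hcS hU
        exact isClosed_closure
      have hint : (⋂₀ c).Nonempty := by
        refine IsCompact.nonempty_sInter_of_directed_nonempty_isCompact_isClosed hdir ?_
          (fun U hU => (hcl U hU).isCompact) hcl
        intro U hU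
        obtain ⟨x, rfl⟩ := hcS hU
        exact ⟨x, subset_closure rfl⟩
      obtain ⟨y, hy⟩ := hint
      refine ⟨closure {y}, Set.mem_range_self y, fun u hu => ?_⟩
      exact closure_minimal (Set.singleton_subset_iff.mpr (hy u hu)) (hcl u hu)
    obtain ⟨x₀⟩ := (inferInstance : Nonempty X)
    obtain ⟨M, hMsub, hMmin⟩ := zorn_superset_nonempty S hzorn (closure {x₀}) ⟨x₀, rfl⟩
    obtain ⟨a, hMa⟩ := hMmin.prop
    have haM : a ∈ M := by rw [← hMa]; exact subset_closure rfl
    have hb : ∃ b : X, a ∉ closure {b} := by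
      by_contra h
      push_neg at h
      have : a ∈ ⋂ x : X, closure {x} := Set.mem_iInter.mpr h
      rw [h5] at this
      exact this
    obtain ⟨b, hab⟩ := hb
    obtain ⟨M', hM'sub, hM'min⟩ := zorn_superset_nonempty S hzorn (closure {b}) ⟨b, rfl⟩
    obtain ⟨b', hM'b⟩ := hM'min.prop
    refine ⟨a, b', ?_⟩
    rw [Set.eq_empty_iff_forall_notMem]
    rintro z ⟨hz1, hz2⟩
    -- closure {z} ⊆ closure {a} = M, so by minimality M ⊆ closure {z}
    have hsub1 : closure {z} ⊆ M := by
      rw [← hMa]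
      exact closure_minimal (Set.singleton_subset_iff.mpr hz1) isClosed_closure
    have hsub2 : M ⊆ closure {z} := hMmin.2 ⟨z, rfl⟩ hsub1
    have hzM' : closure {z} ⊆ M' := by
      rw [← hM'b]
      exact closure_minimal (Set.singleton_subset_iff.mpr hz2) isClosed_closure
    have : a ∈ closure {b} := hM'sub (hzM' (hsub2 haM))
    exact hab this
  tfae_have 4 → 1 := by
    rintro ⟨a, b, hab⟩
    have haneb : a ≠ b := by
      rintro rfl
      have : a ∈ closure {a} ∩ closure {a} := ⟨subset_closure rfl, subset_closure rfl⟩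
      rw [hab] at this
      exact this
    have hinj : Function.Injective (seqOf a b : (ℕ → Bool) → ℕ → X) := by
      intro s t hst
      by_contra hne
      obtain ⟨m, hm⟩ := Function.ne_iff.mp hne
      obtain ⟨p, hp⟩ := (codeFn_infinite m).nonempty
      have hthis := congrFun hst p
      rw [seqOf_some a b s hp, seqOf_some a b t hp] at hthis
      rcases Bool.dichotomy (s m) with hsm | hsm <;>
        rcases Bool.dichotomy (t m) with htm | htm <;>
        rw [hsm, htm] at hthis <;> simp at hthis <;>
        first
          | exact hm (hsm.trans htm.symm)
          | exact haneb hthis.symm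
          | exact haneb hthis
    refine ⟨Set.range (seqOf a b), ?_, ?_⟩
    · intro hc
      haveI h1 : Countable (Set.range (seqOf a b : (ℕ → Bool) → ℕ → X)) :=
        Set.countable_coe_iff.mpr hc
      have hcnt : Countable (ℕ → Bool) :=
        Countable.of_equiv _ (Equiv.ofInjective _ hinj).symm
      exact absurd hcnt (not_countable_iff.mpr uncountable_nat_bool)
    · rintro x ⟨s, rfl⟩ y ⟨t, rfl⟩ hxy
      have hst : s ≠ t := fun h => hxy (h ▸ rfl)
      obtain ⟨m, hm⟩ := Function.ne_iff.mp hst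
      exact scrambled_of_disjoint hab hm
  tfae_finish
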